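/- Let G be a multigraph on n ≥ 2 vertices with minimum cut value c ≥ 1, and suppose each edge fails independently with probability p ∈ [0,1], where p^c = n^{-(2+δ)} for some real δ > 0. Then for every real α ≥ 1, the probability that some cut of G of value at least α·c fails (i.e., all edges of its edge set fail) is at most n^{-αδ}(1 + 2/δ). -/

import Mathlib

open scoped Classical

/-- A multigraph on vertex type `V` is given by an edge-index type `E` together with a map
`ends : E → Sym2 V` assigning to each edge its (unordered) pair of endpoints; the hypothesis
`∀ e, ¬ (ends e).IsDiag` says that the two endpoints of every edge are distinct.
`survGraph ends F` is the simple graph on `V` whose adjacencies are given by the edges of the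
multigraph that survive when the edges in `F` fail. -/
def survGraph {V E : Type} (ends : E → Sym2 V) (F : Finset E) : SimpleGraph V :=
  SimpleGraph.fromRel (fun x y => ∃ e, e ∉ F ∧ ends e = s(x, y))

/-- The number of connected components of the graph surviving after the edges in `F` fail. -/
noncomputable def numComponents {V E : Type} (ends : E → Sym2 V) (F : Finset E) : ℕ :=
  Nat.card (survGraph ends F).ConnectedComponent

/-- Edge `e` crosses the 2-way cut determined by the vertex set `A` (one endpoint in `A`,
one endpoint outside `A`). -/
def crosses {V E : Type} (ends : E → Sym2 V) (A : Finset V) (e : E) : Prop :=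
  (∃ x ∈ ends e, x ∈ A) ∧ (∃ x ∈ ends e, x ∉ A)

/-- The edge set of the 2-way cut determined by the vertex set `A`. -/
noncomputable def cutEdges {V E : Type} [Fintype E] (ends : E → Sym2 V) (A : Finset V) :
    Finset E :=
  Finset.univ.filter (crosses ends A)

/-- The value of the 2-way cut determined by the vertex set `A`. -/
noncomputable def cutValue {V E : Type} [Fintype E] (ends : E → Sym2 V) (A : Finset V) : ℕ :=
  (cutEdges ends A).card

/-- When each edge fails independently with probability `p`, this is the probability that the
(random) set of failed edges is a member of `S`. -/
noncomputable def failurePr {E : Type} [Fintype E] (p : ℝ) (S : Finset (Finset E)) : ℝ :=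
  ∑ F ∈ S, p ^ F.card * (1 - p) ^ (Fintype.card E - F.card)

open Finset


noncomputable def psi (s : ℝ) (n : ℕ) : ℝ :=
  2 ^ (⌊s⌋₊) * ∏ k ∈ Finset.Ioc (⌊s⌋₊ + 1) n, ((k : ℝ) / ((k : ℝ) - s))

lemma two_pow_le_factorial (r : ℕ) : 2 ^ r ≤ (r+1).factorial := by
  induction r with
  | zero => simp
  | succ r ih =>
    rw [pow_succ, Nat.factorial_succ]
    calc 2^r * 2 ≤ (r+1).factorial * 2 := Nat.mul_le_mul_right 2 ih
    _ ≤ (r+1+1) * (r+1).factorial := by rw [mul_comm]; exact Nat.mul_le_mul_right _ (by omega)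

lemma prod_Ioc_id_factorial (m : ℕ) : ∏ k ∈ Finset.Ioc 0 m, k = m.factorial := by
  rw [← Finset.Icc_add_one_left_eq_Ioc, ← Finset.Ico_add_one_right_eq_Icc]
  exact Finset.prod_Ico_id_eq_factorial m

lemma prod_Ioc_add_one_factorial (N : ℕ) : ∏ k ∈ Finset.Ioc 0 N, (k+1) = (N+1).factorial := by
  induction N with
  | zero => simp
  | succ N ih =>
    rw [Finset.prod_Ioc_succ_top (by omega), ih, Nat.factorial_succ (N+1)]
    ring

lemma psi_factor_pos {s : ℝ} {n' k : ℕ} (hk : k ∈ Finset.Ioc (⌊s⌋₊ + 1) n') :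
    (0:ℝ) < (k : ℝ) - s := by
  have h1 : ⌊s⌋₊ + 1 < k := (Finset.mem_Ioc.mp hk).1
  have h2 : s < (⌊s⌋₊ : ℝ) + 1 := Nat.lt_floor_add_one s
  have : ((⌊s⌋₊:ℝ) + 1) + 1 ≤ (k:ℝ) := by exact_mod_cast h1
  linarith

lemma psi_nonneg (s : ℝ) (n : ℕ) : 0 ≤ psi s n := by
  apply mul_nonneg (by positivity)
  apply Finset.prod_nonneg
  intro k hk
  exact div_nonneg (by positivity) (psi_factor_pos hk).le

lemma psi_base {s : ℝ} (n : ℕ) (hn : n ≤ ⌊s⌋₊ + 1) : psi s n = 2 ^ (⌊s⌋₊) := by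
  unfold psi
  rw [Finset.Ioc_eq_empty (by omega), Finset.prod_empty, mul_one]

lemma psi_succ {s : ℝ} (n : ℕ) (hn : ⌊s⌋₊ + 1 ≤ n) :
    psi s (n+1) = psi s n * (((n:ℝ)+1) / (((n:ℝ)+1) - s)) := by
  unfold psi
  rw [Finset.prod_Ioc_succ_top hn]
  push_cast
  ring

lemma psi_le {s : ℝ} (hs : 2 ≤ s) {n : ℕ} (hn : 2 ≤ n) : psi s n ≤ (n:ℝ) ^ s := by
  have hrs : ((⌊s⌋₊:ℕ) : ℝ) ≤ s := Nat.floor_le (by linarith)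
  have hsr : s < (⌊s⌋₊:ℝ) + 1 := Nat.lt_floor_add_one s
  have hr2 : 2 ≤ ⌊s⌋₊ := Nat.le_floor (by exact_mod_cast hs)
  have hn1 : (1:ℝ) ≤ (n:ℝ) := by exact_mod_cast Nat.one_le_of_lt hn
  have hns : (0:ℝ) ≤ s := by linarith
  have h2n : (2:ℝ) ≤ (n:ℝ) := by exact_mod_cast hn
  by_cases hcase : n ≤ ⌊s⌋₊ + 1
  · rw [psi_base n hcase]
    calc (2:ℝ)^(⌊s⌋₊) = (2:ℝ)^((⌊s⌋₊:ℕ):ℝ) := (Real.rpow_natCast 2 _).symm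
    _ ≤ (2:ℝ)^s := Real.rpow_le_rpow_of_exponent_le one_le_two hrs
    _ ≤ (n:ℝ)^s := Real.rpow_le_rpow (by norm_num) h2n hns
  · push_neg at hcase
    obtain ⟨r, N, hrdef, hNdef⟩ : ∃ r N, r = ⌊s⌋₊ ∧ N = n - (⌊s⌋₊+1) := ⟨_, _, rfl, rfl⟩
    have hn₀n : r + 1 + 1 ≤ n := by omega
    have hNn : N + (r+1) = n := by omega
    have hN1n : N + 1 ≤ n := by omega
    have hτ0 : (0:ℝ) < ((r:ℝ)+1) - s := by rw [hrdef]; linarith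
    have hτ1 : ((r:ℝ)+1) - s ≤ 1 := by rw [hrdef]; linarith
    -- τ := (r+1) - s, σ := s - r
    set τ := ((r:ℝ)+1) - s with hτdef
    set σ := s - (r:ℝ) with hσdef
    have hστ : σ = 1 - τ := by rw [hσdef, hτdef]; ring
    have hσ0 : (0:ℝ) ≤ σ := by rw [hσdef, hrdef]; linarith
    -- Key 1 : lower bound on denominator product
    have hprodid : ∏ j ∈ Finset.Ioc 0 N, (j:ℝ) = (N.factorial : ℝ) := by
      rw [← prod_Ioc_id_factorial N]; push_cast; rfl
    have hprodid1 : ∏ j ∈ Finset.Ioc 0 N, ((j:ℝ) + 1) = ((N+1).factorial : ℝ) := by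
      rw [← prod_Ioc_add_one_factorial N]; push_cast; rfl
    have hNf0 : (0:ℝ) < (N.factorial : ℝ) := by exact_mod_cast Nat.factorial_pos N
    have key1 : (N.factorial : ℝ) * ((N:ℝ)+1) ^ τ ≤ ∏ k ∈ Finset.Ioc (r+1) n, ((k:ℝ) - s) := by
      have hre : ∏ k ∈ Finset.Ioc (r+1) n, ((k:ℝ) - s) = ∏ j ∈ Finset.Ioc 0 N, ((j:ℝ) + τ) := by
        apply Finset.prod_nbij' (fun k => k - (r+1)) (fun j => j + (r+1))
        · intro k hk; simp only [Finset.mem_Ioc] at *; omega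
        · intro j hj; simp only [Finset.mem_Ioc] at *; omega
        · intro k hk; simp only [Finset.mem_Ioc] at hk; omega
        · intro j hj; simp only [Finset.mem_Ioc] at hj; omega
        · intro k hk
          simp only [Finset.mem_Ioc] at hk
          have : ((k - (r+1) : ℕ) : ℝ) = (k:ℝ) - ((r:ℝ)+1) := by
            have : (r+1) ≤ k := hk.1.le
            push_cast [Nat.cast_sub this]; ring
          rw [this, hτdef]; ring
      rw [hre]
      have hAM : ∀ j ∈ Finset.Ioc 0 N, (j:ℝ)^σ * ((j:ℝ)+1)^τ ≤ (j:ℝ) + τ := by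
        intro j hj
        have h := Real.geom_mean_le_arith_mean2_weighted hσ0 hτ0.le
          (by positivity : (0:ℝ) ≤ (j:ℝ)) (by positivity : (0:ℝ) ≤ (j:ℝ)+1) (by rw [hστ]; ring)
        calc (j:ℝ)^σ * ((j:ℝ)+1)^τ ≤ σ * j + τ * ((j:ℝ)+1) := h
        _ = (j:ℝ) + τ := by rw [hστ]; ring
      calc (N.factorial : ℝ) * ((N:ℝ)+1) ^ τ
          = ((N.factorial:ℝ))^σ * (((N.factorial:ℝ)) * ((N:ℝ)+1))^τ := by
            rw [Real.mul_rpow hNf0.le (by positivity), ← mul_assoc, ← Real.rpow_add hNf0,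
              hστ, show (1 - τ) + τ = (1:ℝ) by ring, Real.rpow_one]
        _ = (∏ j ∈ Finset.Ioc 0 N, (j:ℝ))^σ * (∏ j ∈ Finset.Ioc 0 N, ((j:ℝ)+1))^τ := by
            rw [hprodid, hprodid1]
            congr 2
            push_cast [Nat.factorial_succ]
            ring
        _ = ∏ j ∈ Finset.Ioc 0 N, ((j:ℝ)^σ * ((j:ℝ)+1)^τ) := by
            rw [← Real.finset_prod_rpow _ _ (fun i _ => by positivity),
                ← Real.finset_prod_rpow _ _ (fun i _ => by positivity),
                ← Finset.prod_mul_distrib]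
        _ ≤ ∏ j ∈ Finset.Ioc 0 N, ((j:ℝ) + τ) :=
            Finset.prod_le_prod (fun j _ => by positivity) hAM
    -- Key 2 : 2^r * n! ≤ (r+1)! * n^s * (N! * (N+1)^τ)
    have key2 : (2:ℝ)^r * (n.factorial : ℝ) ≤
        ((r+1).factorial : ℝ) * ((n:ℝ)^s * ((N.factorial:ℝ) * ((N:ℝ)+1) ^ τ)) := by
      have hfactN : n.factorial ≤ N.factorial * ((N+1) * n^r) := by
        have hsplit : N.factorial * ∏ k ∈ Finset.Ioc N n, k = n.factorial := by
          have := Finset.prod_Ioc_consecutive (fun k => k) (Nat.zero_le N) (by omega : N ≤ n)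
          rw [prod_Ioc_id_factorial, prod_Ioc_id_factorial] at this
          exact this
        have hsplit2 : ∏ k ∈ Finset.Ioc N n, k = (N+1) * ∏ k ∈ Finset.Ioc (N+1) n, k := by
          have := Finset.prod_Ioc_consecutive (fun k => k) (by omega : N ≤ N+1) (by omega : N+1 ≤ n)
          rw [← this]
          congr 1
          rw [show Finset.Ioc N (N+1) = {N+1} by rw [← Finset.Icc_add_one_left_eq_Ioc]; simp]
          simp
        have hbound : ∏ k ∈ Finset.Ioc (N+1) n, k ≤ n^r := by
          have hcard : (Finset.Ioc (N+1) n).card = r := by rw [Nat.card_Ioc]; omega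
          calc ∏ k ∈ Finset.Ioc (N+1) n, k ≤ ∏ _k ∈ Finset.Ioc (N+1) n, n :=
                Finset.prod_le_prod' (fun k hk => (Finset.mem_Ioc.mp hk).2)
          _ = n^r := by rw [Finset.prod_const, hcard]
        calc n.factorial = N.factorial * ((N+1) * ∏ k ∈ Finset.Ioc (N+1) n, k) := by
              rw [← hsplit, hsplit2]
        _ ≤ N.factorial * ((N+1) * n^r) := by
              exact Nat.mul_le_mul_left _ (Nat.mul_le_mul_left _ hbound)
      have hfactNR : (n.factorial : ℝ) ≤ (N.factorial : ℝ) * (((N:ℝ)+1) * (n:ℝ)^r) := by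
        exact_mod_cast hfactN
      have hN1pos : (0:ℝ) < (N:ℝ)+1 := by positivity
      have hnpos : (0:ℝ) < (n:ℝ) := by linarith
      have e1 : (n:ℝ)^s = (n:ℝ)^r * (n:ℝ)^σ := by
        rw [← Real.rpow_natCast (n:ℝ) r, ← Real.rpow_add hnpos, hσdef]
        ring_nf
      have e2 : ((N:ℝ)+1) = ((N:ℝ)+1)^τ * ((N:ℝ)+1)^σ := by
        rw [← Real.rpow_add hN1pos, hστ, show τ + (1-τ) = (1:ℝ) by ring, Real.rpow_one]
      have e3 : ((N:ℝ)+1)^σ ≤ (n:ℝ)^σ := by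
        apply Real.rpow_le_rpow hN1pos.le _ hσ0
        exact_mod_cast hN1n
      have e4 : (2:ℝ)^r ≤ ((r+1).factorial : ℝ) := by
        exact_mod_cast two_pow_le_factorial r
      calc (2:ℝ)^r * (n.factorial : ℝ)
          ≤ (2:ℝ)^r * ((N.factorial : ℝ) * (((N:ℝ)+1) * (n:ℝ)^r)) := by
            apply mul_le_mul_of_nonneg_left hfactNR (by positivity)
        _ = ((2:ℝ)^r * ((N:ℝ)+1)^σ) * ((N.factorial : ℝ) * ((N:ℝ)+1)^τ * (n:ℝ)^r) := by
            nth_rewrite 1 [e2]; ring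
        _ ≤ (((r+1).factorial : ℝ) * (n:ℝ)^σ) * ((N.factorial : ℝ) * ((N:ℝ)+1)^τ * (n:ℝ)^r) := by
            apply mul_le_mul_of_nonneg_right _ (by positivity)
            exact mul_le_mul e4 e3 (by positivity) (by positivity)
        _ = ((r+1).factorial : ℝ) * (((n:ℝ)^r * (n:ℝ)^σ) * ((N.factorial:ℝ) * ((N:ℝ)+1) ^ τ)) := by
            ring
        _ = ((r+1).factorial : ℝ) * ((n:ℝ)^s * ((N.factorial:ℝ) * ((N:ℝ)+1) ^ τ)) := by
            rw [← e1]
    -- numerator product identity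
    have hnum : ((r+1).factorial : ℝ) * ∏ k ∈ Finset.Ioc (r+1) n, (k:ℝ) = (n.factorial : ℝ) := by
      have : (∏ k ∈ Finset.Ioc 0 (r+1), k) * ∏ k ∈ Finset.Ioc (r+1) n, k = ∏ k ∈ Finset.Ioc 0 n, k :=
        Finset.prod_Ioc_consecutive _ (by omega) (by omega)
      rw [prod_Ioc_id_factorial, prod_Ioc_id_factorial] at this
      calc ((r+1).factorial : ℝ) * ∏ k ∈ Finset.Ioc (r+1) n, (k:ℝ)
          = (((r+1).factorial * ∏ k ∈ Finset.Ioc (r+1) n, k : ℕ) : ℝ) := by push_cast; ring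
        _ = _ := by rw [this]
    -- assemble
    have hden_pos : (0:ℝ) < ∏ k ∈ Finset.Ioc (r+1) n, ((k:ℝ) - s) :=
      Finset.prod_pos (fun k hk => by rw [hrdef] at hk; exact psi_factor_pos hk)
    have hpsi : psi s n = (2:ℝ)^r * ((∏ k ∈ Finset.Ioc (r+1) n, (k:ℝ)) / ∏ k ∈ Finset.Ioc (r+1) n, ((k:ℝ) - s)) := by
      unfold psi
      rw [hrdef, ← Finset.prod_div_distrib]
    rw [hpsi, mul_div_assoc' ]
    rw [div_le_iff₀ hden_pos]
    have hfacpos : (0:ℝ) < ((r+1).factorial : ℝ) := by exact_mod_cast Nat.factorial_pos (r+1)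
    rw [← mul_le_mul_iff_of_pos_left hfacpos]
    calc ((r+1).factorial : ℝ) * ((2:ℝ)^r * ∏ k ∈ Finset.Ioc (r+1) n, (k:ℝ))
        = (2:ℝ)^r * (((r+1).factorial : ℝ) * ∏ k ∈ Finset.Ioc (r+1) n, (k:ℝ)) := by ring
      _ = (2:ℝ)^r * (n.factorial : ℝ) := by rw [hnum]
      _ ≤ ((r+1).factorial : ℝ) * ((n:ℝ)^s * ((N.factorial:ℝ) * ((N:ℝ)+1) ^ τ)) := key2
      _ ≤ ((r+1).factorial : ℝ) * ((n:ℝ)^s * ∏ k ∈ Finset.Ioc (r+1) n, ((k:ℝ) - s)) := by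
          apply mul_le_mul_of_nonneg_left _ hfacpos.le
          exact mul_le_mul_of_nonneg_left key1 (Real.rpow_nonneg (by linarith) s)



section GraphBasics
variable {V E : Type}

lemma sym2_rep (z : Sym2 V) : ∃ x y, z = s(x,y) := by
  induction z using Sym2.inductionOn with
  | hf x y => exact ⟨x, y, rfl⟩

lemma crosses_iff {ends : E → Sym2 V} {A : Finset V} {e : E} {x y : V}
    (h : ends e = s(x,y)) :
    crosses ends A e ↔ ((x ∈ A ∧ y ∉ A) ∨ (y ∈ A ∧ x ∉ A)) := by
  unfold crosses
  rw [h]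
  simp only [Sym2.mem_iff]
  constructor
  · rintro ⟨⟨u, hu1, hu2⟩, ⟨w, hw1, hw2⟩⟩
    rcases hu1 with rfl | rfl <;> rcases hw1 with rfl | rfl <;> tauto
  · rintro (⟨h1, h2⟩ | ⟨h1, h2⟩)
    · exact ⟨⟨x, Or.inl rfl, h1⟩, ⟨y, Or.inr rfl, h2⟩⟩
    · exact ⟨⟨y, Or.inr rfl, h1⟩, ⟨x, Or.inl rfl, h2⟩⟩

lemma crosses_compl [Fintype V] [DecidableEq V] {ends : E → Sym2 V} {A : Finset V} {e : E} :
    crosses ends Aᶜ e ↔ crosses ends A e := by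
  obtain ⟨x, y, h⟩ := sym2_rep (ends e)
  rw [crosses_iff h, crosses_iff h]
  simp only [Finset.mem_compl]
  tauto

lemma cutEdges_compl [Fintype V] [DecidableEq V] [Fintype E] (ends : E → Sym2 V) (A : Finset V) :
    cutEdges ends Aᶜ = cutEdges ends A := by
  unfold cutEdges
  apply Finset.filter_congr
  intro e _
  simp [crosses_compl]

lemma cutValue_compl [Fintype V] [DecidableEq V] [Fintype E] (ends : E → Sym2 V) (A : Finset V) :
    cutValue ends Aᶜ = cutValue ends A := by
  unfold cutValue
  rw [cutEdges_compl]

lemma cutValue_le [Fintype E] (ends : E → Sym2 V) (A : Finset V) :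
    cutValue ends A ≤ Fintype.card E :=
  (Finset.card_filter_le _ _).trans_eq Finset.card_univ

lemma degree_sum [Fintype V] [DecidableEq V] [Fintype E] (ends : E → Sym2 V)
    (hnd : ∀ e, ¬ (ends e).IsDiag) :
    ∑ v : V, cutValue ends {v} = 2 * Fintype.card E := by
  unfold cutValue cutEdges
  have h1 : ∀ v : V, (Finset.univ.filter (crosses ends {v})).card
      = ∑ e : E, if crosses ends {v} e then 1 else 0 := by
    intro v; rw [Finset.card_filter]
  simp_rw [h1]
  rw [Finset.sum_comm]
  have h2 : ∀ e : E, (∑ v : V, if crosses ends {v} e then 1 else 0) = 2 := by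
    intro e
    obtain ⟨x, y, h⟩ := sym2_rep (ends e)
    have hxy : x ≠ y := by
      intro hc; apply hnd e; rw [h, hc]; exact Sym2.mk_isDiag_iff.mpr rfl
    rw [← Finset.card_filter]
    have : Finset.univ.filter (fun v => crosses ends {v} e) = {x, y} := by
      ext v
      simp only [Finset.mem_filter, Finset.mem_univ, true_and, Finset.mem_insert,
        Finset.mem_singleton]
      rw [crosses_iff h]
      simp only [Finset.mem_singleton]
      constructor
      · rintro (⟨h1, _⟩ | ⟨h1, _⟩) <;> simp [h1.symm]
      · rintro (rfl | rfl)
        · left; exact ⟨rfl, fun hc => hxy hc.symm⟩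
        · right; exact ⟨rfl, fun hc => hxy hc⟩
    rw [this, Finset.card_insert_of_notMem (by simpa using hxy), Finset.card_singleton]
  simp_rw [h2]
  simp [Finset.card_univ, mul_comm]

end GraphBasics

section Contract
variable {V E : Type}

lemma contract_step [Fintype V] [DecidableEq V] [Fintype E]
    (ends : E → Sym2 V) (hnd : ∀ e, ¬ (ends e).IsDiag)
    (c : ℕ) (hmin : ∀ A : Finset V, A.Nonempty → Aᶜ.Nonempty → c ≤ cutValue ends A)
    (v₀ : V) (e₀ : E) (t : ℝ) :
    ∃ (V' E' : Type) (_ : Fintype V') (_ : DecidableEq V') (_ : Fintype E')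
      (ends' : E' → Sym2 V') (v₀' : V'),
      Fintype.card V' = Fintype.card V - 1 ∧
      (∀ e, ¬ (ends' e).IsDiag) ∧
      (∀ A' : Finset V', A'.Nonempty → A'ᶜ.Nonempty → c ≤ cutValue ends' A') ∧
      ((Finset.univ.filter (fun A : Finset V =>
          (v₀ ∈ A ∧ Aᶜ.Nonempty ∧ ((cutValue ends A : ℝ)) * 2 ≤ t) ∧ ¬ crosses ends A e₀)).card
        ≤ (Finset.univ.filter (fun A' : Finset V' =>
          v₀' ∈ A' ∧ A'ᶜ.Nonempty ∧ ((cutValue ends' A' : ℝ)) * 2 ≤ t)).card) := by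
  classical
  obtain ⟨x, y, he⟩ := sym2_rep (ends e₀)
  have hxy : x ≠ y := fun hc => hnd e₀ (by rw [he, hc]; exact Sym2.mk_isDiag_iff.mpr rfl)
  obtain ⟨a, b, hab, hbv₀, he'⟩ : ∃ a b, a ≠ b ∧ b ≠ v₀ ∧ ends e₀ = s(a, b) := by
    by_cases hyv : y = v₀
    · refine ⟨y, x, fun hc => hxy hc.symm, fun hc => hxy (hc.trans hyv.symm), ?_⟩
      · rw [he, Sym2.eq_swap]
    · exact ⟨x, y, hxy, hyv, he⟩
  set V' := {z : V // z ≠ b} with hV'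
  set π : V → V' := fun z => if h : z = b then ⟨a, hab⟩ else ⟨z, h⟩ with hπ
  have hπ1 : ∀ z : V', π z.1 = z := by
    intro z; simp only [hπ, dif_neg z.2]; rfl
  have hπb : π b = ⟨a, hab⟩ := by simp only [hπ, dif_pos rfl]
  have hπa : π a = ⟨a, hab⟩ := by simp only [hπ, dif_neg hab]
  have hπval : ∀ z : V, (π z).1 = if z = b then a else z := by
    intro z
    by_cases hz : z = b
    · subst hz; rw [hπb, if_pos rfl]
    · simp only [hπ, dif_neg hz, if_neg hz]
  set E' := {e : E // ¬ (Sym2.map π (ends e)).IsDiag} with hE'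
  set ends' : E' → Sym2 V' := fun e => Sym2.map π (ends e.1) with hends'
  -- lift of a cut of the contracted graph
  set L : Finset V' → Finset V := fun A' => Finset.univ.filter (fun z => π z ∈ A') with hL
  have hmemL : ∀ (A' : Finset V') (z : V), z ∈ L A' ↔ π z ∈ A' := by
    intro A' z; simp [hL]
  -- cut values agree
  have hLval : ∀ A' : Finset V', cutValue ends' A' = cutValue ends (L A') := by
    intro A'
    unfold cutValue cutEdges
    apply Finset.card_bij (fun (e' : E') _ => e'.1)
    · intro e' he'mem
      simp only [Finset.mem_filter, Finset.mem_univ, true_and] at he'mem ⊢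
      obtain ⟨u, w, hu⟩ := sym2_rep (ends e'.1)
      have hmap : ends' e' = s(π u, π w) := by
        show Sym2.map π (ends e'.1) = _
        rw [hu]; exact Sym2.map_pair_eq π u w
      rw [crosses_iff hmap] at he'mem
      rw [crosses_iff hu]
      simp only [hmemL]
      tauto
    · intro e1 h1 e2 h2 hval
      exact Subtype.ext hval
    · intro e hemem
      simp only [Finset.mem_filter, Finset.mem_univ, true_and] at hemem
      obtain ⟨u, w, hu⟩ := sym2_rep (ends e)
      rw [crosses_iff hu] at hemem
      simp only [hmemL] at hemem
      have hne : π u ≠ π w := by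
        intro hc; rw [hc] at hemem; tauto
      have hdiag : ¬ (Sym2.map π (ends e)).IsDiag := by
        rw [hu, Sym2.map_pair_eq, Sym2.mk_isDiag_iff]
        exact hne
      refine ⟨⟨e, hdiag⟩, ?_, rfl⟩
      simp only [Finset.mem_filter, Finset.mem_univ, true_and]
      have hmap : ends' ⟨e, hdiag⟩ = s(π u, π w) := by
        show Sym2.map π (ends e) = _
        rw [hu]; exact Sym2.map_pair_eq π u w
      rw [crosses_iff hmap]
      tauto
  -- min cut of the contracted graph
  have hmin' : ∀ A' : Finset V', A'.Nonempty → A'ᶜ.Nonempty → c ≤ cutValue ends' A' := by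
    intro A' h1 h2
    rw [hLval]
    apply hmin
    · obtain ⟨z, hz⟩ := h1
      exact ⟨z.1, (hmemL A' z.1).mpr (by rwa [hπ1])⟩
    · obtain ⟨z, hz⟩ := h2
      refine ⟨z.1, ?_⟩
      rw [Finset.mem_compl, hmemL, hπ1]
      rwa [Finset.mem_compl] at hz
  refine ⟨V', E', inferInstance, inferInstance, inferInstance, ends', ⟨v₀, fun hc => hbv₀ hc.symm⟩,
    by simp [hV', Fintype.card_subtype_compl, Fintype.card_subtype_eq], (fun e => e.2), hmin', ?_⟩
  -- the injection on counted cuts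
  apply Finset.card_le_card_of_injOn (fun A => Finset.univ.filter (fun z : V' => z.1 ∈ A))
  · intro A hA
    simp only [Finset.mem_coe, Finset.mem_filter, Finset.mem_univ, true_and] at hA
    obtain ⟨⟨hv₀A, hcompl, hval⟩, hncross⟩ := hA
    have hsame : a ∈ A ↔ b ∈ A := by
      rw [crosses_iff he'] at hncross
      tauto
    have hLΦ : L (Finset.univ.filter (fun z : V' => z.1 ∈ A)) = A := by
      ext z
      rw [hmemL]
      simp only [Finset.mem_filter, Finset.mem_univ, true_and]
      rw [hπval]
      by_cases hz : z = b
      · subst hz; rw [if_pos rfl]; exact hsame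
      · rw [if_neg hz]
    simp only [Finset.mem_coe, Finset.mem_filter, Finset.mem_univ, true_and]
    refine ⟨by simpa using hv₀A, ?_, ?_⟩
    · obtain ⟨w, hw⟩ := hcompl
      rw [Finset.mem_compl] at hw
      by_cases hwb : w = b
      · refine ⟨⟨a, hab⟩, ?_⟩
        rw [Finset.mem_compl]
        simp only [Finset.mem_filter, Finset.mem_univ, true_and]
        rw [hsame, ← hwb]
        exact hw
      · refine ⟨⟨w, hwb⟩, ?_⟩
        rw [Finset.mem_compl]
        simpa using hw
    · rw [hLval, hLΦ]
      exact hval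
  · intro A1 h1 A2 h2 heq
    simp only [Finset.mem_coe, Finset.mem_filter, Finset.mem_univ, true_and] at h1 h2
    have hsame1 : a ∈ A1 ↔ b ∈ A1 := by
      have := h1.2; rw [crosses_iff he'] at this; tauto
    have hsame2 : a ∈ A2 ↔ b ∈ A2 := by
      have := h2.2; rw [crosses_iff he'] at this; tauto
    have hmem : ∀ z : V, z ≠ b → (z ∈ A1 ↔ z ∈ A2) := by
      intro z hz
      change Finset.univ.filter (fun z : V' => z.1 ∈ A1) = Finset.univ.filter (fun z : V' => z.1 ∈ A2) at heq
      have : (⟨z, hz⟩ : V') ∈ Finset.univ.filter (fun z : V' => z.1 ∈ A1) ↔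
          (⟨z, hz⟩ : V') ∈ Finset.univ.filter (fun z : V' => z.1 ∈ A2) := by rw [heq]
      simpa using this
    ext z
    by_cases hz : z = b
    · subst hz
      rw [← hsame1, ← hsame2]
      exact hmem a hab
    · exact hmem z hz

end Contract

section Count

lemma count_cuts (s : ℝ) (hs : 2 ≤ s) :
    ∀ (n : ℕ) (V E : Type) (_ : Fintype V) (_ : DecidableEq V) (_ : Fintype E),
      Fintype.card V = n →
      ∀ (ends : E → Sym2 V), (∀ e, ¬ (ends e).IsDiag) →
      ∀ (c : ℕ), 1 ≤ c →
      (∀ A : Finset V, A.Nonempty → Aᶜ.Nonempty → c ≤ cutValue ends A) →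
      ∀ (v₀ : V),
      (((Finset.univ.filter (fun A : Finset V =>
         v₀ ∈ A ∧ Aᶜ.Nonempty ∧ ((cutValue ends A : ℝ)) * 2 ≤ s * c)).card : ℝ)) ≤ psi s n := by
  intro n
  induction n using Nat.strong_induction_on with
  | _ n IH =>
  intro V E _ _ _ hcard ends hnd c hc hmin v₀
  have hcount : ((Finset.univ.filter (fun A : Finset V =>
      v₀ ∈ A ∧ Aᶜ.Nonempty ∧ ((cutValue ends A : ℝ)) * 2 ≤ s * c)).card : ℝ) ≤ 2 ^ (n-1) := by
    have hsub : (Finset.univ.filter (fun A : Finset V =>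
        v₀ ∈ A ∧ Aᶜ.Nonempty ∧ ((cutValue ends A : ℝ)) * 2 ≤ s * c))
        ⊆ Finset.univ.filter (fun A : Finset V => v₀ ∈ A) := by
      intro A hA
      simp only [Finset.mem_filter, Finset.mem_univ, true_and] at *
      exact hA.1
    have hinj : ((Finset.univ.filter (fun A : Finset V => v₀ ∈ A)).card : ℕ)
        ≤ ((Finset.univ.erase v₀).powerset).card := by
      apply Finset.card_le_card_of_injOn (fun A => A.erase v₀)
      · intro A hA
        simp only [Finset.mem_coe, Finset.mem_powerset]
        exact Finset.erase_subset_erase v₀ (Finset.subset_univ A)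
      · intro A1 h1 A2 h2 heq
        simp only [Finset.mem_coe, Finset.mem_filter, Finset.mem_univ, true_and] at h1 h2
        rw [← Finset.insert_erase h1, ← Finset.insert_erase h2]
        simp only at heq
        rw [heq]
    rw [Finset.card_powerset, Finset.card_erase_of_mem (Finset.mem_univ v₀), Finset.card_univ,
      hcard] at hinj
    calc ((Finset.univ.filter (fun A : Finset V =>
        v₀ ∈ A ∧ Aᶜ.Nonempty ∧ ((cutValue ends A : ℝ)) * 2 ≤ s * c)).card : ℝ)
        ≤ ((Finset.univ.filter (fun A : Finset V => v₀ ∈ A)).card : ℝ) := by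
          exact_mod_cast Finset.card_le_card hsub
      _ ≤ 2 ^ (n-1) := by exact_mod_cast hinj
  by_cases hbase : n ≤ ⌊s⌋₊ + 1
  · rw [psi_base n hbase]
    calc _ ≤ ((2:ℝ)) ^ (n-1) := hcount
    _ ≤ (2:ℝ) ^ (⌊s⌋₊) := by
        apply pow_le_pow_right₀ one_le_two
        omega
  · push_neg at hbase
    -- recursive case
    have hn1 : 1 ≤ n := by omega
    have hr2 : 2 ≤ ⌊s⌋₊ := Nat.le_floor (by exact_mod_cast hs)
    have hsn : s < (n:ℝ) - 1 := by
      have h1 : s < (⌊s⌋₊:ℝ) + 1 := Nat.lt_floor_add_one s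
      have h2 : ((⌊s⌋₊:ℕ):ℝ) + 2 ≤ (n:ℝ) := by exact_mod_cast hbase
      linarith
    have hnV : Nonempty V := by
      rw [← Fintype.card_pos_iff, hcard]; omega
    have hVcard2 : 2 ≤ Fintype.card V := by omega
    set 𝒞 := Finset.univ.filter (fun A : Finset V =>
      v₀ ∈ A ∧ Aᶜ.Nonempty ∧ ((cutValue ends A : ℝ)) * 2 ≤ s * c) with h𝒞
    -- per-edge bound via contraction
    have key : ∀ e₀ : E, ((𝒞.filter (fun A => ¬ crosses ends A e₀)).card : ℝ) ≤ psi s (n-1) := by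
      intro e₀
      obtain ⟨V', E', iV', dV', iE', ends', v₀', hcard', hnd', hmin', hle⟩ :=
        contract_step ends hnd c hmin v₀ e₀ (s * c)
      have hcard'' : Fintype.card V' = n - 1 := by rw [hcard', hcard]
      have hIH := IH (n-1) (by omega) V' E' iV' dV' iE' hcard'' ends' hnd' c hc hmin' v₀'
      rw [h𝒞, Finset.filter_filter]
      calc ((Finset.univ.filter (fun A : Finset V =>
          (v₀ ∈ A ∧ Aᶜ.Nonempty ∧ ((cutValue ends A : ℝ)) * 2 ≤ s * c) ∧ ¬ crosses ends A e₀)).card : ℝ)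
          ≤ ((Finset.univ.filter (fun A' : Finset V' =>
            v₀' ∈ A' ∧ A'ᶜ.Nonempty ∧ ((cutValue ends' A' : ℝ)) * 2 ≤ s * c)).card : ℝ) := by
            exact_mod_cast hle
        _ ≤ psi s (n-1) := hIH
    -- degree sum
    have hdeg : (n:ℝ) * c ≤ 2 * (Fintype.card E : ℝ) := by
      have h1 : ∑ v : V, cutValue ends {v} = 2 * Fintype.card E := degree_sum ends hnd
      have h2 : ∀ v : V, c ≤ cutValue ends {v} := by
        intro v
        apply hmin _ (Finset.singleton_nonempty v)
        obtain ⟨w, hw⟩ := Fintype.exists_ne_of_one_lt_card (by omega) v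
        exact ⟨w, by simpa using hw⟩
      have h3 : Fintype.card V * c ≤ ∑ v : V, cutValue ends {v} := by
        calc Fintype.card V * c = ∑ _v : V, c := by rw [Finset.sum_const, Finset.card_univ]; ring
        _ ≤ _ := Finset.sum_le_sum (fun v _ => h2 v)
      rw [h1] at h3
      rw [hcard] at h3
      exact_mod_cast h3
    set m := (Fintype.card E : ℝ) with hm
    set ψ' := psi s (n-1) with hψ'
    have hψ'0 : 0 ≤ ψ' := psi_nonneg s (n-1)
    have hc0 : (0:ℝ) < c := by exact_mod_cast hc
    have hpos : 0 < 2*m - s*c := by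
      have : s * c < (n:ℝ) * c := by
        apply mul_lt_mul_of_pos_right _ hc0
        linarith
      linarith
    -- double counting
    have hdouble : (𝒞.card : ℝ) * (2*m - s*c) ≤ 2 * (m * ψ') := by
      have hsum1 : ∀ A ∈ 𝒞, (2*m - s*c) ≤ 2 * ((Finset.univ.filter (fun e => ¬ crosses ends A e)).card : ℝ) := by
        intro A hA
        have hval : ((cutValue ends A : ℝ)) * 2 ≤ s * c := by
          rw [h𝒞] at hA
          simp only [Finset.mem_filter, Finset.mem_univ, true_and] at hA
          exact hA.2.2
        have hsplit : cutValue ends A + (Finset.univ.filter (fun e => ¬ crosses ends A e)).card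
            = Fintype.card E := by
          rw [← Finset.card_univ]
          exact Finset.card_filter_add_card_filter_not _
        have : ((Finset.univ.filter (fun e => ¬ crosses ends A e)).card : ℝ)
            = m - cutValue ends A := by
          rw [hm, ← hsplit]; push_cast; ring
        rw [this]
        linarith
      have hsum2 : (𝒞.card : ℝ) * (2*m - s*c)
          ≤ ∑ A ∈ 𝒞, 2 * ((Finset.univ.filter (fun e => ¬ crosses ends A e)).card : ℝ) := by
        calc (𝒞.card : ℝ) * (2*m - s*c) = ∑ _A ∈ 𝒞, (2*m - s*c) := by
              rw [Finset.sum_const, nsmul_eq_mul]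
          _ ≤ _ := Finset.sum_le_sum hsum1
      have hswapN : ∑ A ∈ 𝒞, (Finset.univ.filter (fun e => ¬ crosses ends A e)).card
          = ∑ e : E, (𝒞.filter (fun A => ¬ crosses ends A e)).card := by
        simp_rw [Finset.card_filter]
        exact Finset.sum_comm
      have hbnd : (∑ e : E, ((𝒞.filter (fun A => ¬ crosses ends A e)).card : ℝ)) ≤ m * ψ' := by
        calc (∑ e : E, ((𝒞.filter (fun A => ¬ crosses ends A e)).card : ℝ))
            ≤ ∑ _e : E, ψ' := Finset.sum_le_sum (fun e _ => key e)
          _ = m * ψ' := by rw [Finset.sum_const, nsmul_eq_mul, Finset.card_univ]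
      calc (𝒞.card : ℝ) * (2*m - s*c)
          ≤ ∑ A ∈ 𝒞, 2 * ((Finset.univ.filter (fun e => ¬ crosses ends A e)).card : ℝ) := hsum2
        _ = 2 * ∑ e : E, ((𝒞.filter (fun A => ¬ crosses ends A e)).card : ℝ) := by
            rw [← Finset.mul_sum]
            congr 1
            calc ∑ A ∈ 𝒞, ((Finset.univ.filter (fun e => ¬ crosses ends A e)).card : ℝ)
                = ((∑ A ∈ 𝒞, (Finset.univ.filter (fun e => ¬ crosses ends A e)).card : ℕ) : ℝ) := by
                  push_cast; rfl
              _ = _ := by rw [hswapN]; push_cast; rfl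
        _ ≤ 2 * (m * ψ') := by linarith [hbnd]
    -- combine
    have hns : (0:ℝ) < (n:ℝ) - s := by linarith
    have h2m : 2*m*((n:ℝ) - s) ≤ (n:ℝ)*(2*m - s*c) := by nlinarith
    have hfin : (𝒞.card : ℝ) * ((n:ℝ) - s) ≤ (n:ℝ) * ψ' := by
      have h1 : (𝒞.card:ℝ) * (2*m - s*c) * ((n:ℝ)-s) ≤ 2*(m*ψ') * ((n:ℝ)-s) :=
        mul_le_mul_of_nonneg_right hdouble hns.le
      have h2 : 2*(m*ψ') * ((n:ℝ)-s) = ψ' * (2*m*((n:ℝ)-s)) := by ring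
      have h3 : ψ' * (2*m*((n:ℝ)-s)) ≤ ψ' * ((n:ℝ)*(2*m - s*c)) :=
        mul_le_mul_of_nonneg_left h2m hψ'0
      have h4 : (𝒞.card:ℝ) * ((n:ℝ)-s) * (2*m - s*c) ≤ ((n:ℝ) * ψ') * (2*m - s*c) := by
        nlinarith
      exact le_of_mul_le_mul_right h4 hpos
    have hpsin : psi s n = ψ' * (((n:ℝ)) / ((n:ℝ) - s)) := by
      have h1 : n - 1 + 1 = n := by omega
      have h2 := psi_succ (s := s) (n-1) (by omega)
      rw [h1] at h2
      have h3 : ((n-1:ℕ):ℝ) + 1 = (n:ℝ) := by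
        push_cast [Nat.cast_sub hn1]; ring
      rw [h3] at h2
      rw [h2, hψ']
    rw [hpsin]
    have heq : ψ' * ((n:ℝ)/((n:ℝ)-s)) = (n:ℝ)*ψ'/((n:ℝ)-s) := by ring
    rw [heq, le_div_iff₀ hns]
    exact hfin
end Count


lemma sum_biUnion_le' {α β : Type} [DecidableEq β] (s : Finset α) (t : α → Finset β)
    (f : β → ℝ) (hf : ∀ b, 0 ≤ f b) :
    ∑ b ∈ s.biUnion t, f b ≤ ∑ a ∈ s, ∑ b ∈ t a, f b := by
  induction s using Finset.induction with
  | empty => simp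
  | @insert a s ha ih =>
    rw [Finset.biUnion_insert, Finset.sum_insert ha]
    calc ∑ b ∈ t a ∪ s.biUnion t, f b ≤ ∑ b ∈ t a, f b + ∑ b ∈ s.biUnion t, f b := by
          have h := Finset.sum_union_inter (s₁ := t a) (s₂ := s.biUnion t) (f := f)
          have h2 : 0 ≤ ∑ b ∈ t a ∩ s.biUnion t, f b := Finset.sum_nonneg (fun b _ => hf b)
          linarith
      _ ≤ _ := by linarith [ih]

lemma binom_superset {E : Type} [Fintype E] (p : ℝ) (B : Finset E) :
    ∑ F ∈ Finset.univ.filter (fun F : Finset E => B ⊆ F),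
      p ^ F.card * (1 - p) ^ (Fintype.card E - F.card) = p ^ B.card := by
  have hbij : ∑ F ∈ Finset.univ.filter (fun F : Finset E => B ⊆ F),
      p ^ F.card * (1 - p) ^ (Fintype.card E - F.card)
      = ∑ G ∈ Bᶜ.powerset, p ^ (B.card + G.card) * (1 - p) ^ (Fintype.card E - (B.card + G.card)) := by
    apply Finset.sum_nbij' (fun F => F \ B) (fun G => B ∪ G)
    · intro F hF
      simp only [Finset.mem_filter, Finset.mem_univ, true_and] at hF
      simp only [Finset.mem_powerset]
      intro e he
      simp only [Finset.mem_sdiff] at he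
      simp only [Finset.mem_compl]
      exact he.2
    · intro G hG
      simp only [Finset.mem_filter, Finset.mem_univ, true_and]
      exact Finset.subset_union_left
    · intro F hF
      simp only [Finset.mem_filter, Finset.mem_univ, true_and] at hF
      exact Finset.union_sdiff_of_subset hF
    · intro G hG
      simp only [Finset.mem_powerset] at hG
      have hdisj : Disjoint B G := by
        rw [Finset.disjoint_left]
        intro e heB heG
        have := hG heG
        simp only [Finset.mem_compl] at this
        exact this heB
      rw [Finset.union_sdiff_cancel_left hdisj]
    · intro F hF
      simp only [Finset.mem_filter, Finset.mem_univ, true_and] at hF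
      have hcard : (F \ B).card + B.card = F.card := Finset.card_sdiff_add_card_eq_card hF
      rw [show B.card + (F \ B).card = F.card by omega]
  rw [hbij]
  have hexp : ∀ G ∈ Bᶜ.powerset,
      p ^ (B.card + G.card) * (1 - p) ^ (Fintype.card E - (B.card + G.card))
      = p ^ B.card * (p ^ G.card * (1 - p) ^ (Bᶜ.card - G.card)) := by
    intro G hG
    simp only [Finset.mem_powerset] at hG
    have h1 : Bᶜ.card = Fintype.card E - B.card := by
      rw [Finset.card_compl]
    have h2 : B.card ≤ Fintype.card E := by
      calc B.card ≤ Finset.univ.card := Finset.card_le_card (Finset.subset_univ B)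
      _ = Fintype.card E := Finset.card_univ
    have h3 : G.card ≤ Bᶜ.card := Finset.card_le_card hG
    have h4 : Fintype.card E - (B.card + G.card) = Bᶜ.card - G.card := by omega
    rw [h4, pow_add, mul_assoc]
  rw [Finset.sum_congr rfl hexp, ← Finset.mul_sum]
  have hsum1 : ∑ G ∈ Bᶜ.powerset, p ^ G.card * (1 - p) ^ (Bᶜ.card - G.card) = 1 := by
    have := Finset.prod_add (fun _ : E => p) (fun _ : E => 1 - p) Bᶜ
    simp only [Finset.prod_const] at this
    have h2 : ∀ G ∈ Bᶜ.powerset, p ^ G.card * (1-p)^(Bᶜ.card - G.card)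
        = p ^ G.card * (1-p) ^ (Bᶜ \ G).card := by
      intro G hG
      rw [Finset.card_sdiff_of_subset (Finset.mem_powerset.mp hG)]
    rw [Finset.sum_congr rfl h2, ← this]
    simp
  rw [hsum1, mul_one]

lemma tele_geom (p : ℝ) (v m : ℕ) (h : v ≤ m) :
    (1 - p) * ∑ k ∈ Finset.Icc v m, p ^ k + p ^ (m+1) = p ^ v := by
  have hre : ∑ k ∈ Finset.Icc v m, p ^ k = ∑ i ∈ Finset.range (m + 1 - v), p ^ (v + i) := by
    apply Finset.sum_nbij' (fun k => k - v) (fun i => v + i)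
    · intro k hk; simp only [Finset.mem_Icc] at hk; simp only [Finset.mem_range]; omega
    · intro i hi; simp only [Finset.mem_range] at hi; simp only [Finset.mem_Icc]; omega
    · intro k hk; simp only [Finset.mem_Icc] at hk; omega
    · intro i hi; omega
    · intro k hk; simp only [Finset.mem_Icc] at hk
      congr 1; omega
  rw [hre]
  have htel : (1 - p) * ∑ i ∈ Finset.range (m + 1 - v), p ^ (v + i)
      = p ^ v - p ^ (v + (m + 1 - v)) := by
    have := Finset.sum_range_sub (fun i => p ^ (v + i)) (m + 1 - v)
    calc (1-p) * ∑ i ∈ Finset.range (m+1-v), p^(v+i)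
        = -∑ i ∈ Finset.range (m+1-v), (p^(v+(i+1)) - p^(v+i)) := by
          rw [← Finset.sum_neg_distrib, Finset.mul_sum]
          congr 1; ext i; ring_nf
    _ = p^v - p^(v+(m+1-v)) := by rw [this]; ring
  rw [htel, show v + (m + 1 - v) = m + 1 by omega]
  ring

set_option maxHeartbeats 2000000 in
theorem stmt2 {V E : Type} [Fintype V] [DecidableEq V] [Fintype E]
    (ends : E → Sym2 V) (hnd : ∀ e, ¬ (ends e).IsDiag)
    (hn : 2 ≤ Fintype.card V) (c : ℕ) (hc : 1 ≤ c)
    (hmin : ∀ A : Finset V, A.Nonempty → Aᶜ.Nonempty → c ≤ cutValue ends A)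
    (hex : ∃ A : Finset V, A.Nonempty ∧ Aᶜ.Nonempty ∧ cutValue ends A = c)
    (p δ : ℝ) (hp0 : 0 ≤ p) (hp1 : p ≤ 1) (hδ : 0 < δ)
    (hpc : p ^ c = (Fintype.card V : ℝ) ^ (-(2 + δ)))
    (α : ℝ) (hα : 1 ≤ α) :
    failurePr p (Finset.univ.filter (fun F : Finset E =>
        ∃ A : Finset V, A.Nonempty ∧ Aᶜ.Nonempty ∧
          α * c ≤ (cutValue ends A : ℝ) ∧ cutEdges ends A ⊆ F))
      ≤ (Fintype.card V : ℝ) ^ (-(α * δ)) * (1 + 2 / δ) := by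
  classical
  set n := Fintype.card V with hn_def
  set m := Fintype.card E with hm_def
  have hδ2 : (0:ℝ) < 2 / δ := by positivity
  have hRHS0 : (0:ℝ) ≤ (n:ℝ) ^ (-(α * δ)) * (1 + 2 / δ) := by
    apply mul_nonneg (Real.rpow_nonneg (by positivity) _)
    linarith
  have hc0 : (0:ℝ) < (c:ℝ) := by exact_mod_cast hc
  have hn1R : (1:ℝ) < (n:ℝ) := by exact_mod_cast hn
  have hnpos : (0:ℝ) < (n:ℝ) := by linarith
  obtain ⟨v₀⟩ : Nonempty V := by
    rw [← Fintype.card_pos_iff, ← hn_def]; omega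
  -- p and q as rpow of n
  have hpeq : p = (n:ℝ) ^ (-(2+δ) * (c:ℝ)⁻¹) := by
    have h1 : (p ^ c) ^ ((c:ℝ)⁻¹) = p := Real.pow_rpow_inv_natCast hp0 (by omega)
    rw [← h1, hpc, ← Real.rpow_mul hnpos.le]
  set q : ℝ := (n:ℝ) ^ (-δ * (c:ℝ)⁻¹) with hq_def
  have hq1 : q < 1 := by
    apply Real.rpow_lt_one_of_one_lt_of_neg hn1R
    have : (0:ℝ) < (c:ℝ)⁻¹ := by positivity
    nlinarith
  have hq0 : 0 ≤ q := Real.rpow_nonneg hnpos.le _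
  have hpleq : p ≤ q := by
    rw [hpeq, hq_def]
    apply Real.rpow_le_rpow_of_exponent_le hn1R.le
    have h1 : (0:ℝ) < (c:ℝ)⁻¹ := by positivity
    nlinarith
  have h1q : (0:ℝ) < 1 - q := by linarith
  have hppow : ∀ k : ℕ, p ^ k = (n:ℝ) ^ ((-(2+δ) * (c:ℝ)⁻¹) * k) := by
    intro k
    rw [hpeq, ← Real.rpow_natCast ((n:ℝ) ^ (-(2+δ) * (c:ℝ)⁻¹)) k, ← Real.rpow_mul hnpos.le]
  have hqpow : ∀ k : ℕ, q ^ k = (n:ℝ) ^ ((-δ * (c:ℝ)⁻¹) * k) := by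
    intro k
    rw [hq_def, ← Real.rpow_natCast ((n:ℝ) ^ (-δ * (c:ℝ)⁻¹)) k, ← Real.rpow_mul hnpos.le]
  -- the family of "bad" cuts through v₀
  set 𝒜 := Finset.univ.filter (fun A : Finset V =>
    v₀ ∈ A ∧ Aᶜ.Nonempty ∧ α * c ≤ (cutValue ends A : ℝ)) with h𝒜
  set S := Finset.univ.filter (fun F : Finset E =>
      ∃ A : Finset V, A.Nonempty ∧ Aᶜ.Nonempty ∧
        α * c ≤ (cutValue ends A : ℝ) ∧ cutEdges ends A ⊆ F) with hS
  have hsub : S ⊆ 𝒜.biUnion (fun A => Finset.univ.filter (fun F => cutEdges ends A ⊆ F)) := by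
    intro F hF
    rw [hS, Finset.mem_filter] at hF
    obtain ⟨-, A, hA1, hA2, hA3, hA4⟩ := hF
    rw [Finset.mem_biUnion]
    by_cases hv : v₀ ∈ A
    · refine ⟨A, ?_, by simp [hA4]⟩
      rw [h𝒜, Finset.mem_filter]
      exact ⟨Finset.mem_univ A, hv, hA2, hA3⟩
    · refine ⟨Aᶜ, ?_, ?_⟩
      · rw [h𝒜, Finset.mem_filter]
        refine ⟨Finset.mem_univ _, Finset.mem_compl.mpr hv, by rwa [compl_compl], ?_⟩
        rw [cutValue_compl]
        exact hA3
      · simp only [Finset.mem_filter, Finset.mem_univ, true_and]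
        rw [cutEdges_compl]
        exact hA4
  by_cases hA0 : 𝒜 = ∅
  · have hSempty : S = ∅ := by
      rw [← Finset.subset_empty]
      calc S ⊆ 𝒜.biUnion _ := hsub
      _ = ∅ := by rw [hA0]; simp
    unfold failurePr
    rw [hSempty, Finset.sum_empty]
    exact hRHS0
  -- 𝒜 nonempty ⇒ α c ≤ m
  have hαm : α * c ≤ (m:ℝ) := by
    obtain ⟨A, hA⟩ := Finset.nonempty_iff_ne_empty.mpr hA0
    rw [h𝒜, Finset.mem_filter] at hA
    have h1 : (cutValue ends A : ℝ) ≤ (m:ℝ) := by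
      exact_mod_cast cutValue_le ends A
    linarith [hA.2.2.2]
  set k₀ := ⌈α * (c:ℝ)⌉₊ with hk₀_def
  have hk₀m : k₀ ≤ m := Nat.ceil_le.mpr hαm
  -- Step 1 : union bound
  have hw0 : ∀ F : Finset E, 0 ≤ p ^ F.card * (1-p) ^ (m - F.card) := by
    intro F
    apply mul_nonneg (pow_nonneg hp0 _) (pow_nonneg (by linarith) _)
  have h1 : failurePr p S ≤ ∑ A ∈ 𝒜, p ^ (cutValue ends A) := by
    unfold failurePr
    calc ∑ F ∈ S, p ^ F.card * (1-p) ^ (m - F.card)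
        ≤ ∑ F ∈ 𝒜.biUnion (fun A => Finset.univ.filter (fun F => cutEdges ends A ⊆ F)),
            p ^ F.card * (1-p) ^ (m - F.card) := by
          apply Finset.sum_le_sum_of_subset_of_nonneg hsub
          intro F _ _
          exact hw0 F
      _ ≤ ∑ A ∈ 𝒜, ∑ F ∈ Finset.univ.filter (fun F => cutEdges ends A ⊆ F),
            p ^ F.card * (1-p) ^ (m - F.card) :=
          sum_biUnion_le' 𝒜 _ _ hw0
      _ = ∑ A ∈ 𝒜, p ^ (cutValue ends A) := by
          apply Finset.sum_congr rfl
          intro A _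
          exact binom_superset p (cutEdges ends A)
  -- Step 2 : regroup by cut value
  set M : ℕ → ℕ := fun k => (𝒜.filter (fun A => cutValue ends A ≤ k)).card with hM_def
  have h2 : ∑ A ∈ 𝒜, (p:ℝ) ^ (cutValue ends A)
      = (1-p) * ∑ k ∈ Finset.range (m+1), (M k : ℝ) * p ^ k + (𝒜.card : ℝ) * p ^ (m+1) := by
    have hper : ∀ A ∈ 𝒜, (p:ℝ) ^ (cutValue ends A)
        = (1-p) * ∑ k ∈ Finset.Icc (cutValue ends A) m, p ^ k + p ^ (m+1) := by
      intro A _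
      exact (tele_geom p _ m (cutValue_le ends A)).symm
    rw [Finset.sum_congr rfl hper, Finset.sum_add_distrib, Finset.sum_const, nsmul_eq_mul]
    congr 1
    rw [← Finset.mul_sum]
    congr 1
    have hIcc : ∀ A ∈ 𝒜, ∑ k ∈ Finset.Icc (cutValue ends A) m, (p:ℝ) ^ k
        = ∑ k ∈ Finset.range (m+1), if cutValue ends A ≤ k then (p:ℝ)^k else 0 := by
      intro A _
      rw [← Finset.sum_filter]
      congr 1
      ext k
      simp only [Finset.mem_Icc, Finset.mem_filter, Finset.mem_range]
      omega
    rw [Finset.sum_congr rfl hIcc, Finset.sum_comm]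
    apply Finset.sum_congr rfl
    intro k _
    rw [Finset.sum_ite, Finset.sum_const_zero, add_zero, Finset.sum_const, nsmul_eq_mul]
  -- Step 3 : per-k bound
  have h4 : ∀ k : ℕ, (M k : ℝ) * p ^ k ≤ if k₀ ≤ k then q ^ k else 0 := by
    intro k
    by_cases hMk : M k = 0
    · rw [hMk]
      simp only [Nat.cast_zero, zero_mul]
      split
      · exact pow_nonneg hq0 k
      · exact le_rfl
    · have hex : ∃ A ∈ 𝒜, cutValue ends A ≤ k := by
        obtain ⟨A, hA⟩ := Finset.card_pos.mp (Nat.pos_of_ne_zero hMk)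
        rw [Finset.mem_filter] at hA
        exact ⟨A, hA.1, hA.2⟩
      obtain ⟨A, hA𝒜, hAk⟩ := hex
      rw [h𝒜, Finset.mem_filter] at hA𝒜
      have hαk : α * c ≤ (k:ℝ) := by
        have h1 : (cutValue ends A : ℝ) ≤ (k:ℝ) := by exact_mod_cast hAk
        linarith [hA𝒜.2.2.2]
      have hck : (c:ℝ) ≤ (k:ℝ) := by nlinarith
      have hk₀k : k₀ ≤ k := Nat.ceil_le.mpr hαk
      rw [if_pos hk₀k]
      have hs2 : 2 ≤ 2 * (k:ℝ) / c := by
        rw [le_div_iff₀ hc0]; linarith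
      have hMle : (M k : ℝ) ≤ (n:ℝ) ^ (2*(k:ℝ)/c) := by
        have hsubM : 𝒜.filter (fun A => cutValue ends A ≤ k)
            ⊆ Finset.univ.filter (fun A : Finset V =>
              v₀ ∈ A ∧ Aᶜ.Nonempty ∧ ((cutValue ends A : ℝ)) * 2 ≤ (2*(k:ℝ)/c) * c) := by
          intro A hA
          rw [Finset.mem_filter] at hA
          obtain ⟨hA1, hA2⟩ := hA
          rw [h𝒜, Finset.mem_filter] at hA1
          rw [Finset.mem_filter]
          refine ⟨Finset.mem_univ _, hA1.2.1, hA1.2.2.1, ?_⟩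
          have he : (2*(k:ℝ)/c) * c = 2 * k := by field_simp
          rw [he]
          have : (cutValue ends A : ℝ) ≤ (k:ℝ) := by exact_mod_cast hA2
          linarith
        calc (M k : ℝ) ≤ ((Finset.univ.filter (fun A : Finset V =>
              v₀ ∈ A ∧ Aᶜ.Nonempty ∧ ((cutValue ends A : ℝ)) * 2 ≤ (2*(k:ℝ)/c) * c)).card : ℝ) := by
              exact_mod_cast Finset.card_le_card hsubM
          _ ≤ psi (2*(k:ℝ)/c) n := count_cuts (2*(k:ℝ)/c) hs2 n V E inferInstance inferInstance
              inferInstance hn_def.symm ends hnd c hc hmin v₀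
          _ ≤ (n:ℝ) ^ (2*(k:ℝ)/c) := psi_le hs2 hn
      calc (M k : ℝ) * p ^ k ≤ (n:ℝ) ^ (2*(k:ℝ)/c) * p ^ k :=
            mul_le_mul_of_nonneg_right hMle (pow_nonneg hp0 k)
        _ = q ^ k := by
            rw [hppow k, hqpow k, ← Real.rpow_add hnpos]
            congr 1
            field_simp
            ring
  -- Step 4 : sum the bounds
  have h5 : ∑ k ∈ Finset.range (m+1), (M k : ℝ) * p ^ k ≤ ∑ k ∈ Finset.Icc k₀ m, q ^ k := by
    calc ∑ k ∈ Finset.range (m+1), (M k:ℝ) * p^k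
        ≤ ∑ k ∈ Finset.range (m+1), (if k₀ ≤ k then q^k else 0) :=
          Finset.sum_le_sum (fun k _ => h4 k)
      _ = ∑ k ∈ (Finset.range (m+1)).filter (fun k => k₀ ≤ k), q^k := by
          rw [Finset.sum_filter]
      _ = ∑ k ∈ Finset.Icc k₀ m, q^k := by
          congr 1
          ext k
          simp only [Finset.mem_filter, Finset.mem_range, Finset.mem_Icc]
          omega
  have h6 : (𝒜.card : ℝ) * p ^ (m+1) ≤ q ^ (m+1) := by
    have hAM : 𝒜.card = M m := by
      rw [hM_def]
      congr 1
      rw [Finset.filter_true_of_mem]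
      intro A _
      exact cutValue_le ends A
    have h4m := h4 m
    rw [if_pos hk₀m] at h4m
    have hMm0 : (0:ℝ) ≤ (M m : ℝ) * p ^ m := by positivity
    calc (𝒜.card:ℝ) * p^(m+1) = p * ((M m:ℝ) * p^m) := by rw [hAM]; ring
      _ ≤ q * q^m := mul_le_mul hpleq h4m hMm0 hq0
      _ = q^(m+1) := by ring
  have h7 : (1-p) * ∑ k ∈ Finset.Icc k₀ m, q^k + q^(m+1) ≤ (1-p) * q^k₀ / (1-q) := by
    have htele := tele_geom q k₀ m hk₀m
    rw [le_div_iff₀ h1q]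
    have hqm0 : (0:ℝ) ≤ q^(m+1) := pow_nonneg hq0 _
    have hpq0 : p - q ≤ 0 := by linarith
    have hprod : (p - q) * q^(m+1) ≤ 0 := mul_nonpos_of_nonpos_of_nonneg hpq0 hqm0
    calc ((1-p) * ∑ k ∈ Finset.Icc k₀ m, q^k + q^(m+1)) * (1-q)
        = (1-p) * ((1-q) * ∑ k ∈ Finset.Icc k₀ m, q^k + q^(m+1)) + (p - q) * q^(m+1) := by ring
      _ = (1-p) * q^k₀ + (p - q) * q^(m+1) := by rw [htele]
      _ ≤ (1-p) * q^k₀ := by linarith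
  -- Step 5 : final bounds
  have h8 : q ^ k₀ ≤ (n:ℝ) ^ (-(α*δ)) := by
    rw [hqpow k₀]
    apply Real.rpow_le_rpow_of_exponent_le hn1R.le
    have hαck₀ : α * c ≤ (k₀:ℝ) := Nat.le_ceil _
    have hpos2 : (0:ℝ) < δ * (c:ℝ)⁻¹ := by positivity
    have h := mul_le_mul_of_nonneg_right hαck₀ hpos2.le
    have h2 : α * (c:ℝ) * (δ * (c:ℝ)⁻¹) = α * δ := by
      field_simp
    linarith [h, h2]
  have h9 : δ * (1 - p) ≤ (2 + δ) * (1 - q) := by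
    set x := (n:ℝ) ^ (-(c:ℝ)⁻¹) with hx_def
    have hx0 : 0 < x := Real.rpow_pos_of_pos hnpos _
    have hx1 : x < 1 := by
      apply Real.rpow_lt_one_of_one_lt_of_neg hn1R
      have : (0:ℝ) < (c:ℝ)⁻¹ := by positivity
      linarith
    have hpx : p = x ^ (2+δ) := by
      rw [hpeq, hx_def, ← Real.rpow_mul hnpos.le]
      congr 1
      ring
    have hqx : q = x ^ δ := by
      rw [hq_def, hx_def, ← Real.rpow_mul hnpos.le]
      congr 1
      ring
    have hsplit : x ^ (2+δ) = x ^ δ * x ^ (2:ℝ) := by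
      rw [← Real.rpow_add hx0]
      congr 1
      ring
    have hlogneg : Real.log x < 0 := Real.log_neg hx0 hx1
    have hstep2 : 1 - x ^ (2:ℝ) ≤ -2 * Real.log x := by
      have h := Real.log_le_sub_one_of_pos (Real.rpow_pos_of_pos hx0 (2:ℝ))
      rw [Real.log_rpow hx0] at h
      linarith
    have hstep3 : δ * (-Real.log x) * x ^ δ ≤ 1 - x ^ δ := by
      have hxd : x ^ δ = Real.exp (-(δ * (-Real.log x))) := by
        rw [Real.rpow_def_of_pos hx0]
        congr 1
        ring
      set z := δ * (-Real.log x) with hz_def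
      have he := Real.add_one_le_exp z
      have hepos : 0 < Real.exp (-z) := Real.exp_pos _
      have hmul : (z + 1) * Real.exp (-z) ≤ Real.exp z * Real.exp (-z) :=
        mul_le_mul_of_nonneg_right he hepos.le
      rw [← Real.exp_add, add_neg_cancel, Real.exp_zero] at hmul
      rw [hxd]
      nlinarith
    have hxd0 : (0:ℝ) ≤ x ^ δ := (Real.rpow_pos_of_pos hx0 δ).le
    have hmul2 : δ * (x ^ δ) * (1 - x^(2:ℝ)) ≤ δ * (x^δ) * (-2 * Real.log x) := by
      apply mul_le_mul_of_nonneg_left hstep2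
      positivity
    rw [hpx, hqx, hsplit]
    nlinarith
  have hfrac : (1-p)/(1-q) ≤ 1 + 2/δ := by
    rw [div_le_iff₀ h1q]
    have heq : (1 + 2/δ) = (2+δ)/δ := by
      field_simp
      ring
    rw [heq, div_mul_eq_mul_div, le_div_iff₀ hδ]
    nlinarith
  -- assemble everything
  calc failurePr p S ≤ ∑ A ∈ 𝒜, p ^ (cutValue ends A) := h1
    _ = (1-p) * ∑ k ∈ Finset.range (m+1), (M k : ℝ) * p ^ k + (𝒜.card : ℝ) * p ^ (m+1) := h2
    _ ≤ (1-p) * ∑ k ∈ Finset.Icc k₀ m, q^k + q^(m+1) := by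
        have h1p : (0:ℝ) ≤ 1 - p := by linarith
        have := mul_le_mul_of_nonneg_left h5 h1p
        linarith [h6]
    _ ≤ (1-p) * q^k₀ / (1-q) := h7
    _ = ((1-p)/(1-q)) * q^k₀ := by ring
    _ ≤ (1 + 2/δ) * (n:ℝ)^(-(α*δ)) := by
        apply mul_le_mul hfrac h8 (pow_nonneg hq0 _) (by linarith)
    _ = (n:ℝ) ^ (-(α*δ)) * (1 + 2/δ) := by ring
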